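/- Let f : ℝⁿ → ℝ be convex and differentiable, let g : ℝⁿ → (−∞, +∞] be proper, lower semicontinuous and convex, and let λ > 0. Then a point x ∈ ℝⁿ minimizes f + g over ℝⁿ if and only if x is a fixed point of the prox-grad mapping, i.e., prox_{λg}(x − λ∇f(x)) = x. -/

import Mathlib

open Filter Topology Set
open scoped RealInnerProductSpace

lemma aux_dir_tendsto {d : ℕ} {f : EuclideanSpace ℝ (Fin d) → ℝ}
    {p x : EuclideanSpace ℝ (Fin d)} (h : HasGradientAt f p x)
    (v : EuclideanSpace ℝ (Fin d)) :
    Tendsto (fun t : ℝ => t⁻¹ * (f (x + t • v) - f x)) (𝓝[>] (0:ℝ)) (𝓝 ⟪p, v⟫) := by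
  have h1 := (hasGradientAt_iff_hasFDerivAt.mp h).hasLineDerivAt v
  simp only [InnerProductSpace.toDual_apply_apply] at h1
  simpa [smul_eq_mul] using h1.tendsto_slope_zero_right

lemma aux_grad_ineq {d : ℕ} {f : EuclideanSpace ℝ (Fin d) → ℝ}
    {p x : EuclideanSpace ℝ (Fin d)} (hconv : ConvexOn ℝ Set.univ f)
    (h : HasGradientAt f p x) (u : EuclideanSpace ℝ (Fin d)) :
    ⟪p, u - x⟫ ≤ f u - f x := by
  refine le_of_tendsto (aux_dir_tendsto h (u - x)) ?_
  filter_upwards [Ioc_mem_nhdsGT_of_mem (by exact ⟨le_refl 0, zero_lt_one⟩ : (0:ℝ) ∈ Ico 0 1)]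
  intro t ht
  have h1 : x + t • (u - x) = t • u + (1 - t) • x := by
    rw [smul_sub, sub_smul, one_smul]; abel
  have h2 := hconv.2 (mem_univ u) (mem_univ x) ht.1.le (by linarith [ht.2] : (0:ℝ) ≤ 1 - t)
    (by ring)
  rw [← h1] at h2
  rw [inv_mul_le_iff₀ ht.1]
  simp only [smul_eq_mul] at h2
  nlinarith [h2]


set_option maxHeartbeats 1000000 in
/-- Fixed-point characterization of minimizers: `x` minimizes `f + g` over ℝⁿ if and only
if `x` is a fixed point of the prox-grad mapping, i.e. `prox_{λg}(x - λ∇f(x)) = x`, for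
any `λ > 0`. Here `f` is convex and differentiable and `g` is proper, lower
semicontinuous and convex. -/
theorem minimizer_iff_proxgrad_fixed_point {d : ℕ}
    (f : EuclideanSpace ℝ (Fin d) → ℝ)
    (f' : EuclideanSpace ℝ (Fin d) → EuclideanSpace ℝ (Fin d))
    (g : EuclideanSpace ℝ (Fin d) → EReal)
    (prox : EuclideanSpace ℝ (Fin d) → EuclideanSpace ℝ (Fin d))
    (lam : ℝ) (hlam : 0 < lam)
    (hfconv : ConvexOn ℝ Set.univ f)
    (hfdiff : ∀ x, HasGradientAt f (f' x) x)
    (hg_nebot : ∀ x, g x ≠ ⊥)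
    (hg_proper : ∃ x, g x ≠ ⊤)
    (hg_lsc : LowerSemicontinuous g)
    (hg_conv : ∀ x y : EuclideanSpace ℝ (Fin d), ∀ a b : ℝ, 0 ≤ a → 0 ≤ b → a + b = 1 →
      g (a • x + b • y) ≤ (a : EReal) * g x + (b : EReal) * g y)
    (hprox : ∀ x u : EuclideanSpace ℝ (Fin d),
      g (prox x) + ((‖prox x - x‖ ^ 2 / (2 * lam) : ℝ) : EReal) ≤
        g u + ((‖u - x‖ ^ 2 / (2 * lam) : ℝ) : EReal))
    (x : EuclideanSpace ℝ (Fin d)) :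
    (∀ u, (f x : EReal) + g x ≤ (f u : EReal) + g u) ↔ prox (x - lam • f' x) = x := by
  set p := f' x with hp
  set y := x - lam • p with hy
  have hsum_ne_top : ∀ (a b : ℝ), ¬ ((⊤ : EReal) ≤ (a : EReal) + (b : EReal)) := by
    intro a b h
    rw [← EReal.coe_add, top_le_iff] at h
    exact EReal.coe_ne_top _ h
  -- quadratic expansion
  have key : ∀ w : EuclideanSpace ℝ (Fin d),
      ‖w - y‖^2 = ‖w - x‖^2 + 2*lam*⟪w - x, p⟫ + lam^2*‖p‖^2 := by
    intro w
    have hwy : w - y = (w - x) + lam • p := by rw [hy]; abel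
    rw [hwy, norm_add_sq_real, real_inner_smul_right, norm_smul, Real.norm_eq_abs,
      abs_of_pos hlam]
    ring
  have keyx : ‖x - y‖^2 = lam^2*‖p‖^2 := by rw [key x]; simp
  have h2l : (0:ℝ) < 2*lam := by linarith
  obtain ⟨w₀, hw₀⟩ := hg_proper
  set gw₀ := (g w₀).toReal with hgw₀def
  have hgw₀ : g w₀ = (gw₀ : EReal) := (EReal.coe_toReal hw₀ (hg_nebot w₀)).symm
  constructor
  · -- minimizer → fixed point
    intro hmin
    set z := prox y with hz
    -- g x is finite
    have hgx_ne_top : g x ≠ ⊤ := by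
      intro htop
      have h1 := hmin w₀
      rw [htop, hgw₀, EReal.add_top_iff_ne_bot.mpr (EReal.coe_ne_bot _)] at h1
      exact hsum_ne_top _ _ h1
    set gx := (g x).toReal with hgxdef
    have hgx : g x = (gx : EReal) := (EReal.coe_toReal hgx_ne_top (hg_nebot x)).symm
    -- g z is finite
    have H0 := hprox y x
    rw [← hz, hgx] at H0
    have hgz_ne_top : g z ≠ ⊤ := by
      intro htop
      rw [htop, EReal.top_add_iff_ne_bot.mpr (EReal.coe_ne_bot _)] at H0
      exact hsum_ne_top _ _ H0
    set gz := (g z).toReal with hgzdef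
    have hgz : g z = (gz : EReal) := (EReal.coe_toReal hgz_ne_top (hg_nebot z)).symm
    rw [hgz] at H0
    have H0r : gz + ‖z - y‖ ^ 2 / (2*lam) ≤ gx + ‖x - y‖ ^ 2 / (2*lam) := by
      exact_mod_cast H0
    have Hstar : gz + ‖z - x‖^2/(2*lam) + ⟪z - x, p⟫ ≤ gx := by
      rw [key z, keyx] at H0r
      have hsplit : (‖z - x‖^2 + 2*lam*⟪z - x, p⟫ + lam^2*‖p‖^2)/(2*lam)
          = ‖z - x‖^2/(2*lam) + ⟪z - x, p⟫ + lam^2*‖p‖^2/(2*lam) := by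
        field_simp
      rw [hsplit] at H0r
      linarith
    -- directional inequality
    have Hdir : gx - gz ≤ ⟪p, z - x⟫ := by
      refine ge_of_tendsto (aux_dir_tendsto (hfdiff x) (z - x)) ?_
      filter_upwards [Ioc_mem_nhdsGT_of_mem (by exact ⟨le_refl 0, zero_lt_one⟩ : (0:ℝ) ∈ Ico 0 1)]
      intro t ht
      set wt := x + t • (z - x) with hwt
      have h1 : wt = t • z + (1 - t) • x := by
        rw [hwt, smul_sub, sub_smul, one_smul]; abel
      have hconvg := hg_conv z x t (1-t) ht.1.le (by linarith [ht.2]) (by ring)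
      rw [← h1, hgx, hgz] at hconvg
      have hconvg' : g wt ≤ ((t * gz + (1-t) * gx : ℝ) : EReal) := by
        refine le_trans hconvg ?_
        push_cast
        exact le_refl _
      have hmin2 : (f x : EReal) + (gx : EReal)
          ≤ (f wt : EReal) + ((t * gz + (1-t) * gx : ℝ) : EReal) := by
        refine le_trans ?_ (add_le_add_right hconvg' _)
        rw [← hgx]; exact hmin wt
      have hminr : f x + gx ≤ f wt + (t * gz + (1-t) * gx) := by exact_mod_cast hmin2
      rw [le_inv_mul_iff₀ ht.1]
      nlinarith [hminr]
    -- combine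
    have hcomm := real_inner_comm p (z - x)
    have h1 : ‖z - x‖^2/(2*lam) ≤ 0 := by linarith
    have hnorm : ‖z - x‖^2 ≤ 0 := by
      have h4 := mul_le_mul_of_nonneg_right h1 h2l.le
      rwa [div_mul_cancel₀ _ h2l.ne', zero_mul] at h4
    have h2 : ‖z - x‖^2 = 0 := le_antisymm hnorm (sq_nonneg _)
    have h3 := norm_eq_zero.mp ((pow_eq_zero_iff two_ne_zero).mp h2)
    rwa [sub_eq_zero] at h3
  · -- fixed point → minimizer
    intro hfix u
    have H0 := hprox y w₀
    rw [hfix, hgw₀] at H0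
    have hgx_ne_top : g x ≠ ⊤ := by
      intro htop
      rw [htop, EReal.top_add_iff_ne_bot.mpr (EReal.coe_ne_bot _)] at H0
      exact hsum_ne_top _ _ H0
    set gx := (g x).toReal with hgxdef
    have hgx : g x = (gx : EReal) := (EReal.coe_toReal hgx_ne_top (hg_nebot x)).symm
    by_cases hgu_top : g u = ⊤
    · rw [hgu_top, EReal.add_top_iff_ne_bot.mpr (EReal.coe_ne_bot _)]
      exact le_top
    set gu := (g u).toReal with hgudef
    have hgu : g u = (gu : EReal) := (EReal.coe_toReal hgu_top (hg_nebot u)).symm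
    -- key step inequality
    have hstep : ∀ t : ℝ, t ∈ Ioc (0:ℝ) 1 →
        gx ≤ gu + t * (‖u - x‖^2/(2*lam)) + ⟪u - x, p⟫ := by
      intro t ht
      set wt := x + t • (u - x) with hwt
      have h1 : wt = t • u + (1 - t) • x := by
        rw [hwt, smul_sub, sub_smul, one_smul]; abel
      have hconvg := hg_conv u x t (1-t) ht.1.le (by linarith [ht.2]) (by ring)
      rw [← h1, hgx, hgu] at hconvg
      have hconvg' : g wt ≤ ((t * gu + (1-t) * gx : ℝ) : EReal) := by
        refine le_trans hconvg ?_
        push_cast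
        exact le_refl _
      have hgwt_ne_top : g wt ≠ ⊤ := by
        intro h
        rw [h] at hconvg'
        exact EReal.coe_ne_top _ (top_le_iff.mp hconvg')
      set gwt := (g wt).toReal with hgwtdef
      have hgwt : g wt = (gwt : EReal) := (EReal.coe_toReal hgwt_ne_top (hg_nebot wt)).symm
      have hconvr : gwt ≤ t * gu + (1-t) * gx := by
        rw [hgwt] at hconvg'; exact_mod_cast hconvg'
      have H1 := hprox y wt
      rw [hfix, hgx, hgwt] at H1
      have H1r : gx + ‖x - y‖^2/(2*lam) ≤ gwt + ‖wt - y‖^2/(2*lam) := by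
        exact_mod_cast H1
      rw [keyx, key wt] at H1r
      have hwtx : wt - x = t • (u - x) := by rw [hwt]; abel
      have hn : ‖wt - x‖^2 = t^2 * ‖u - x‖^2 := by
        rw [hwtx, norm_smul, Real.norm_eq_abs, abs_of_pos ht.1]; ring
      have hi : ⟪wt - x, p⟫ = t * ⟪u - x, p⟫ := by
        rw [hwtx, real_inner_smul_left]
      rw [hn, hi] at H1r
      have hsplit : (t^2*‖u - x‖^2 + 2*lam*(t*⟪u - x, p⟫) + lam^2*‖p‖^2)/(2*lam)
          = t*(t*(‖u - x‖^2/(2*lam))) + t*⟪u - x, p⟫ + lam^2*‖p‖^2/(2*lam) := by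
        field_simp
      rw [hsplit] at H1r
      -- gx ≤ gwt + t*(t*C) + t*D ;  gwt ≤ t*gu + (1-t)*gx
      have e1 : t * gx ≤ t * gu + t*(t*(‖u - x‖^2/(2*lam))) + t*⟪u - x, p⟫ := by
        nlinarith [H1r, hconvr]
      have e2 := le_of_mul_le_mul_left (by linarith [e1] :
        t * gx ≤ t * (gu + t * (‖u - x‖^2/(2*lam)) + ⟪u - x, p⟫)) ht.1
      linarith [e2]
    -- let t → 0
    have hgoal : gx ≤ gu + ⟪u - x, p⟫ := by
      refine le_of_forall_pos_le_add ?_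
      intro ε hε
      set C := ‖u - x‖^2/(2*lam) with hC
      have hC0 : 0 ≤ C := div_nonneg (sq_nonneg _) (by linarith)
      set t := min 1 (ε / (C + 1)) with htdef
      have ht0 : 0 < t := lt_min zero_lt_one (div_pos hε (by linarith))
      have ht1 : t ≤ 1 := min_le_left _ _
      have htC : t * C ≤ ε := by
        have h1 : t ≤ ε / (C + 1) := min_le_right _ _
        have h2 : t * C ≤ (ε / (C+1)) * C := by nlinarith
        have h3 : (ε / (C+1)) * C ≤ ε := by
          rw [div_mul_eq_mul_div, div_le_iff₀ (by linarith : (0:ℝ) < C + 1)]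
          nlinarith
        linarith
      have := hstep t ⟨ht0, ht1⟩
      linarith
    have hf := aux_grad_ineq hfconv (hfdiff x) u
    have hcomm := real_inner_comm p (u - x)
    have hfinal : f x + gx ≤ f u + gu := by linarith
    rw [hgx, hgu]
    exact_mod_cast hfinal
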